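/- (Whaley's successor lemma) Let λ, κ be infinite cardinals. If there exists an Artinian algebra of cardinality κ with signature of size at most λ, then there exists an Artinian algebra of cardinality κ⁺ with signature of size at most λ. -/

import Mathlib

universe u

structure Alg (ι : Type u) (M : Type u) where
  arity : ι → ℕ
  op : (i : ι) → (Fin (arity i) → M) → M

namespace Alg

variable {ι M : Type u}

/-- A set is closed under all operations of the algebra. -/
def Closed (A : Alg ι M) (S : Set M) : Prop :=
  ∀ (i : ι) (x : Fin (A.arity i) → M), (∀ k, x k ∈ S) → A.op i x ∈ S

/-- Membership in the subalgebra generated by `X`. -/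
inductive cl (A : Alg ι M) (X : Set M) : M → Prop
  | base {m : M} (h : m ∈ X) : cl A X m
  | op (i : ι) (x : Fin (A.arity i) → M) (h : ∀ k, cl A X (x k)) : cl A X (A.op i x)

/-- A subset is free if no element lies in the subalgebra generated by the others. -/
def Free (A : Alg ι M) (X : Set M) : Prop :=
  ∀ x ∈ X, ¬ A.cl (X \ {x}) x

/-- An algebra is Artinian if there is no infinite strictly descending chain of
(nonempty closed) subalgebras. -/
def Artinian (A : Alg ι M) : Prop :=
  ¬ ∃ S : ℕ → Set M, (∀ n, (S n).Nonempty ∧ A.Closed (S n)) ∧ ∀ n, S (n + 1) ⊂ S n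

end Alg

open Ordinal Set Cardinal

noncomputable instance (priority := 2000) myIWO (o : Ordinal.{u}) :
    IsWellOrder o.ToType (· < ·) := isWellOrder_lt

noncomputable section WhaleyAux
variable (κ : Cardinal.{u})

abbrev OT : Type u := (Order.succ κ).ord.ToType

lemma ordlt : κ.ord < Ordinal.type ((· < ·) : OT κ → OT κ → Prop) := by
  rw [type_toType]; exact Cardinal.ord_lt_ord.2 (Order.lt_succ κ)

def x0 : OT κ := Ordinal.enum ((· < ·) : OT κ → OT κ → Prop) ⟨κ.ord, ordlt κ⟩

lemma typein_x0 : Ordinal.typein ((· < ·) : OT κ → OT κ → Prop) (x0 κ) = κ.ord :=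
  typein_enum _ _

lemma mk_Iio (δ : OT κ) :
    #(Iio δ) = (Ordinal.typein ((· < ·) : OT κ → OT κ → Prop) δ).card :=
  Ordinal.card_typein (r := ((· < ·) : OT κ → OT κ → Prop)) δ

lemma mk_Iio_x0 : #(Iio (x0 κ)) = κ := by
  rw [mk_Iio, typein_x0, card_ord]

lemma mk_Iio_eq {δ : OT κ} (hδ : x0 κ ≤ δ) : #(Iio δ) = κ := by
  refine le_antisymm (Order.lt_succ_iff.1 (Cardinal.mk_Iio_ord_toType δ)) ?_
  calc κ = #(Iio (x0 κ)) := (mk_Iio_x0 κ).symm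
    _ ≤ #(Iio δ) := Cardinal.mk_le_mk_of_subset (Iio_subset_Iio hδ)

def hbEquiv {δ : OT κ} (hδ : x0 κ ≤ δ) : Iio δ ≃ Iio (x0 κ) :=
  Classical.choice (Cardinal.eq.1 ((mk_Iio_eq κ hδ).trans (mk_Iio_x0 κ).symm))

def Hfun (δ α : OT κ) : OT κ :=
  if h : x0 κ ≤ δ ∧ α < δ then (hbEquiv κ h.1 ⟨α, h.2⟩ : OT κ) else α

def Hfun' (δ ξ : OT κ) : OT κ :=
  if h : x0 κ ≤ δ ∧ ξ < x0 κ then ((hbEquiv κ h.1).symm ⟨ξ, h.2⟩ : OT κ) else ξ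

lemma Hfun_eq {δ α : OT κ} (h1 : x0 κ ≤ δ) (h2 : α < δ) :
    Hfun κ δ α = ↑(hbEquiv κ h1 ⟨α, h2⟩) := dif_pos ⟨h1, h2⟩

lemma Hfun_lt {δ α : OT κ} (h1 : x0 κ ≤ δ) (h2 : α < δ) :
    Hfun κ δ α < x0 κ := by
  rw [Hfun_eq κ h1 h2]; exact (hbEquiv κ h1 ⟨α, h2⟩).2

lemma Hfun'_Hfun {δ α : OT κ} (h1 : x0 κ ≤ δ) (h2 : α < δ) :
    Hfun' κ δ (Hfun κ δ α) = α := by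
  rw [Hfun_eq κ h1 h2, Hfun', dif_pos ⟨h1, (hbEquiv κ h1 ⟨α, h2⟩).2⟩]
  exact congrArg Subtype.val ((hbEquiv κ h1).symm_apply_apply ⟨α, h2⟩)

variable {ι M : Type u} (A : Alg ι M)

def eEquiv (hM : #M = κ) : M ≃ Iio (x0 κ) :=
  Classical.choice (Cardinal.eq.1 (hM.trans (mk_Iio_x0 κ).symm))

def BAlg (hM : #M = κ) (m₀ : M) :
    Alg (ι ⊕ (PUnit.{u+1} ⊕ (PUnit.{u+1} ⊕ PUnit.{u+1}))) (OT κ) where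
  arity := Sum.elim A.arity (Sum.elim (fun _ => 0) (Sum.elim (fun _ => 2) (fun _ => 2)))
  op := fun i => match i with
    | Sum.inl i => fun x =>
        if h : ∀ k, x k ∈ Iio (x0 κ) then
          (eEquiv κ hM (A.op i (fun k => (eEquiv κ hM).symm ⟨x k, h k⟩)) : OT κ)
        else x0 κ
    | Sum.inr (Sum.inl _) => fun _ => (eEquiv κ hM m₀ : OT κ)
    | Sum.inr (Sum.inr (Sum.inl _)) => fun x => Hfun κ (x ⟨0, Nat.succ_pos 1⟩) (x ⟨1, Nat.one_lt_two⟩)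
    | Sum.inr (Sum.inr (Sum.inr _)) => fun x => Hfun' κ (x ⟨0, Nat.succ_pos 1⟩) (x ⟨1, Nat.one_lt_two⟩)

variable {hM : #M = κ} {m₀ : M} {K : Set (OT κ)}

lemma mem_const (hK : (BAlg κ A hM m₀).Closed K) : ↑(eEquiv κ hM m₀) ∈ K :=
  hK (Sum.inr (Sum.inl PUnit.unit)) Fin.elim0 (fun k => k.elim0)

lemma mem_H (hK : (BAlg κ A hM m₀).Closed K) {δ α : OT κ}
    (hδ : δ ∈ K) (hα : α ∈ K) : Hfun κ δ α ∈ K := by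
  have h2 := hK (Sum.inr (Sum.inr (Sum.inl PUnit.unit))) (Fin.cons δ (Fin.cons α Fin.elim0))
    (by
      intro k
      refine Fin.cases ?_ (fun j => ?_) k
      · simpa
      · refine Fin.cases ?_ (fun j => j.elim0) j
        simpa)
  exact h2

lemma mem_H' (hK : (BAlg κ A hM m₀).Closed K) {δ ξ : OT κ}
    (hδ : δ ∈ K) (hξ : ξ ∈ K) : Hfun' κ δ ξ ∈ K := by
  have h2 := hK (Sum.inr (Sum.inr (Sum.inr PUnit.unit))) (Fin.cons δ (Fin.cons ξ Fin.elim0))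
    (by
      intro k
      refine Fin.cases ?_ (fun j => ?_) k
      · simpa
      · refine Fin.cases ?_ (fun j => j.elim0) j
        simpa)
  exact h2

lemma closed_pre (hK : (BAlg κ A hM m₀).Closed K) :
    A.Closed {m | ↑(eEquiv κ hM m) ∈ K} := by
  intro i x hx
  have h2 := hK (Sum.inl i) (fun k => ↑(eEquiv κ hM (x k))) hx
  have hcond : ∀ k : Fin (A.arity i), (↑(eEquiv κ hM (x k)) : OT κ) ∈ Iio (x0 κ) :=
    fun k => (eEquiv κ hM (x k)).2
  have heq : (BAlg κ A hM m₀).op (Sum.inl i) (fun k => ↑(eEquiv κ hM (x k)))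
      = ↑(eEquiv κ hM (A.op i x)) := by
    show dite _ _ _ = _
    split
    · simp
    · exact absurd hcond (by assumption)
  rwa [heq] at h2

theorem BArt (hArt : A.Artinian) : (BAlg κ A hM m₀).Artinian := by
  rintro ⟨S, hS, hlt⟩
  have Santi : ∀ {m n : ℕ}, m ≤ n → S n ⊆ S m := by
    intro m n h
    induction h with
    | refl => exact subset_rfl
    | step _ ih => exact (hlt _).subset.trans ih
  set e := eEquiv κ (M := M) hM with he
  set T : ℕ → Set M := fun n => {m | ↑(e m) ∈ S n} with hT
  have Tdef : ∀ n m, m ∈ T n ↔ ↑(e m) ∈ S n := fun n m => Iff.rfl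
  have Tcl : ∀ n, A.Closed (T n) := fun n => closed_pre κ A (hS n).2
  have Tne : ∀ n, (T n).Nonempty := fun n => ⟨m₀, mem_const κ A (hS n).2⟩
  have Tanti : ∀ {m n : ℕ}, m ≤ n → T n ⊆ T m := fun h m hm => Santi h hm
  have hstab : ∃ N, ∀ n, N ≤ n → T n = T N := by
    by_contra hcon
    push_neg at hcon
    choose g hg1 hg2 using hcon
    refine hArt ⟨fun k => T (g^[k] 0), fun k => ⟨Tne _, Tcl _⟩, fun k => ?_⟩
    show T (g^[k+1] 0) ⊂ T (g^[k] 0)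
    rw [Function.iterate_succ_apply']
    exact ssubset_of_subset_of_ne (Tanti (hg1 _)) (hg2 _)
  obtain ⟨N, hN⟩ := hstab
  have htrans : ∀ {n n' : ℕ}, N ≤ n → N ≤ n' → ∀ {ξ : OT κ}, ξ < x0 κ → ξ ∈ S n → ξ ∈ S n' := by
    intro n n' hn hn' ξ hξ hmem
    have h1 : e.symm ⟨ξ, hξ⟩ ∈ T n := by rw [Tdef]; simpa using hmem
    rw [hN n hn, ← hN n' hn'] at h1
    rw [Tdef] at h1
    simpa using h1
  choose γ hγ1 hγ2 using fun n => Set.exists_of_ssubset (hlt n)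
  have key : ∀ n, N ≤ n → ∀ δ ∈ S (n+1), δ < γ n := by
    intro n hn δ hδ
    have hγS : γ n ∈ S n := hγ1 n
    have hγx : ¬ γ n < x0 κ := fun hc => hγ2 n (htrans hn (by omega) hc hγS)
    rcases lt_or_ge δ (x0 κ) with hcase | hx0δ
    · exact hcase.trans_le (not_lt.1 hγx)
    · have hδn : δ ∈ S n := Santi (by omega) hδ
      have h1 : ¬ γ n < δ := by
        intro hlt'
        have hξ1 : Hfun κ δ (γ n) ∈ S n := mem_H κ A (hS n).2 hδn hγS
        have hξ2 : Hfun κ δ (γ n) < x0 κ := Hfun_lt κ hx0δ hlt'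
        have hξ3 : Hfun κ δ (γ n) ∈ S (n+1) := htrans hn (by omega) hξ2 hξ1
        have h4 : Hfun' κ δ (Hfun κ δ (γ n)) ∈ S (n+1) := mem_H' κ A (hS (n+1)).2 hδ hξ3
        rw [Hfun'_Hfun κ hx0δ hlt'] at h4
        exact hγ2 n h4
      exact lt_of_le_of_ne (not_lt.1 h1) (fun hrm => hγ2 n (hrm ▸ hδ))
  have hdec : ∀ k, γ (N + (k+1)) < γ (N + k) := fun k =>
    key (N + k) (by omega) _ (hγ1 (N + k + 1))
  exact RelEmbedding.not_wellFounded
    (RelEmbedding.natGT (fun k => γ (N + k)) hdec) wellFounded_lt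

end WhaleyAux

open Cardinal

/-- Whaley: If there is an Artinian algebra of cardinality κ with
signature of size at most λ, then there is one of cardinality κ⁺. -/
theorem stmt9 (lam κ : Cardinal.{u}) (hlam : ℵ₀ ≤ lam) (hκ : ℵ₀ ≤ κ)
    (h : ∃ (ι M : Type u) (A : Alg ι M), #ι ≤ lam ∧ #M = κ ∧ A.Artinian) :
    ∃ (ι M : Type u) (A : Alg ι M), #ι ≤ lam ∧ #M = Order.succ κ ∧ A.Artinian := by
  obtain ⟨ι, M, A, hι, hM, hArt⟩ := h
  have hne : Nonempty M := Cardinal.mk_ne_zero_iff.1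
    (by rw [hM]; exact ne_of_gt (lt_of_lt_of_le aleph0_pos hκ))
  obtain ⟨m₀⟩ := hne
  refine ⟨ι ⊕ (PUnit ⊕ (PUnit ⊕ PUnit)), OT κ, BAlg κ A hM m₀, ?_, ?_, BArt κ A hArt⟩
  · have h1 : #(ι ⊕ (PUnit.{u+1} ⊕ (PUnit.{u+1} ⊕ PUnit.{u+1}))) = #ι + 3 := by
      simp
    rw [h1]
    refine Cardinal.add_le_of_le hlam hι (le_trans ?_ hlam)
    exact le_of_lt (Cardinal.lt_aleph0.2 ⟨3, by norm_num⟩)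
  · rw [Cardinal.mk_toType]
    exact card_ord _
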